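/- Let d ∈ (0,1), α > −d, n ≥ 1, and let C = {c₁,…,c_k} be a partition of {1,…,n}. Let z ∈ (ℕ₊)ⁿ satisfy C_z = C, let j₁ < ⋯ < j_k be the distinct values taken by z₁,…,z_n, set b_i = j_i − j_{i−1} (with j₀ = 0) and b̄_i = b₁ + ⋯ + b_i, and let σ be the permutation of {1,…,k} such that c_{σ(i)} = {ℓ : z_ℓ = j_i}. With n_i = |c_i| and a_i(σ) = n_{σ(i)} + ⋯ + n_{σ(k)}, one has ∏_{j=1}^{m(z)} ( (α+(j−1)d) / (g_j(z)+α+(j−1)d) ) = ∏_{i=1}^{k} ( (α/d + b̄_{i−1})_{(b_i)} / ( (a_i(σ)+α)/d + b̄_{i−1} )_{(b_i)} ). -/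

import Mathlib

open MeasureTheory Finset

/-- Rising factorial `(x)_{(n)} = ∏_{j=0}^{n-1} (x+j)`. -/
noncomputable def risingFactorial (x : ℝ) (n : ℕ) : ℝ := ∏ j ∈ Finset.range n, (x + j)

/-- Beta function `B(a,b) = Γ(a)Γ(b)/Γ(a+b)`. -/
noncomputable def betaFn (a b : ℝ) : ℝ := Real.Gamma a * Real.Gamma b / Real.Gamma (a + b)

/-- The partition of `{1,…,n}` induced by an allocation vector `z ∈ (ℕ₊)ⁿ`:
its blocks are the nonempty level sets `{i : z_i = j}`. -/
def Cz {n : ℕ} (z : Fin n → ℕ+) : Finset (Finset (Fin n)) :=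
  Finset.image (fun i => Finset.univ.filter fun i' => z i' = z i) Finset.univ

/-- `m(z) = max {z₁,…,zₙ}`. -/
def mz {n : ℕ} (z : Fin n → ℕ+) : ℕ := Finset.univ.sup fun i => (z i : ℕ)

/-- `g_j(z) = #{i : z_i ≥ j}`. -/
def gz {n : ℕ} (z : Fin n → ℕ+) (j : ℕ) : ℕ :=
  (Finset.univ.filter fun i => j ≤ (z i : ℕ)).card

/-- Access the `j`-th coordinate (1-indexed) of a vector `v : Fin m → ℝ`. -/
noncomputable def stk {m : ℕ} (v : Fin m → ℝ) (j : ℕ) : ℝ :=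
  if h : j - 1 < m then v ⟨j - 1, h⟩ else 0

/-- `C` is a partition of `{1,…,n}`: all blocks are nonempty and every element
belongs to exactly one block. -/
def IsPartition {n : ℕ} (C : Finset (Finset (Fin n))) : Prop :=
  (∀ c ∈ C, c.Nonempty) ∧ ∀ i : Fin n, ∃! c, c ∈ C ∧ i ∈ c

lemma prod_Ioc_chunks (f : ℕ → ℝ) (B : ℕ → ℕ) (K : ℕ) :
    ∏ j ∈ Finset.Ioc 0 (∑ l ∈ Finset.range K, B l), f j
      = ∏ i ∈ Finset.range K,
          ∏ j ∈ Finset.Ioc (∑ l ∈ Finset.range i, B l) (∑ l ∈ Finset.range (i+1), B l), f j := by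
  induction K with
  | zero => simp
  | succ K ih =>
      rw [Finset.prod_range_succ, ← ih,
        Finset.prod_Ioc_consecutive f (Nat.zero_le _)
          (Finset.sum_le_sum_of_subset (Finset.range_subset_range.mpr (Nat.le_succ K)))]

/-- Let `C = {c₁,…,c_k}` be a partition of `{1,…,n}` and `z` an allocation
vector with `C_z = C`. Let `j₁ < ⋯ < j_k` be the distinct values taken by `z`, with increments
`b_i` (so `j_i = b₁ + ⋯ + b_i`, i.e. `j_i = b̄_i`), and let `σ` be the permutation with
`c_{σ(i)} = {ℓ : z_ℓ = j_i}`.  With `n_i = |c_i|` and `a_i(σ) = n_{σ(i)} + ⋯ + n_{σ(k)}`,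
`∏_{j=1}^{m(z)} (α+(j-1)d)/(g_j(z)+α+(j-1)d)
  = ∏_{i=1}^k (α/d + b̄_{i-1})_{(b_i)} / ((a_i(σ)+α)/d + b̄_{i-1})_{(b_i)}`. -/
theorem ratios_product_reindex {n k : ℕ} (hn : 1 ≤ n) (hk : 1 ≤ k) (d α : ℝ)
    (hd : d ∈ Set.Ioo (0 : ℝ) 1) (hα : -d < α)
    (c : Fin k → Finset (Fin n))
    (hne : ∀ i, (c i).Nonempty) (hinj : Function.Injective c)
    (hdisj : ∀ i i', i ≠ i' → Disjoint (c i) (c i'))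
    (hcover : ∀ ℓ : Fin n, ∃ i, ℓ ∈ c i)
    (z : Fin n → ℕ+) (hz : Cz z = Finset.image c Finset.univ)
    (jv : Fin k → ℕ+) (hmono : StrictMono fun i => (jv i : ℕ))
    (himg : Finset.image (fun i => (z i : ℕ)) Finset.univ
      = Finset.image (fun i => (jv i : ℕ)) Finset.univ)
    (b : Fin k → ℕ+) (hb : ∀ i, (jv i : ℕ) = ∑ l ∈ Finset.Iic i, ((b l : ℕ)))
    (σ : Equiv.Perm (Fin k))
    (hσ : ∀ i, c (σ i) = Finset.univ.filter fun ℓ => z ℓ = jv i) :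
    (∏ j ∈ Finset.Icc 1 (mz z),
        (α + ((j : ℝ) - 1) * d) / ((gz z j : ℝ) + α + ((j : ℝ) - 1) * d))
      = ∏ i : Fin k,
          risingFactorial (α / d + ∑ l ∈ Finset.Iio i, ((b l : ℕ) : ℝ)) (b i) /
            risingFactorial
              (((∑ l ∈ Finset.Ici i, ((c (σ l)).card : ℝ)) + α) / d +
                ∑ l ∈ Finset.Iio i, ((b l : ℕ) : ℝ)) (b i) := by
  
  have hd0 : d ≠ 0 := ne_of_gt hd.1
  set S : Fin k → ℕ := fun i => ∑ l ∈ Finset.Iio i, (b l : ℕ) with hS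
  set A : Fin k → ℕ := fun i => ∑ l ∈ Finset.Ici i, (c (σ l)).card with hA
  set f : ℕ → ℝ :=
    fun j => (α + ((j : ℝ) - 1) * d) / ((gz z j : ℝ) + α + ((j : ℝ) - 1) * d) with hf
  -- jv i = S i + b i
  have hjvS : ∀ i, (jv i : ℕ) = S i + b i := by
    intro i
    rw [hb i, ← Finset.Iio_insert, Finset.sum_insert (by simp)]
    simp only [hS]; omega
  -- every value of z is some jv
  have hzval : ∀ ℓ, ∃ i, z ℓ = jv i := by
    intro ℓ
    have : (z ℓ : ℕ) ∈ Finset.image (fun i => (jv i : ℕ)) Finset.univ :=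
      himg ▸ Finset.mem_image_of_mem _ (Finset.mem_univ ℓ)
    obtain ⟨i, -, hi⟩ := Finset.mem_image.mp this
    exact ⟨i, PNat.coe_injective hi.symm⟩
  -- the largest index
  have hkpos : 0 < k := hk
  set L : Fin k := ⟨k - 1, Nat.sub_lt hkpos one_pos⟩ with hL
  have hleL : ∀ i : Fin k, i ≤ L := fun i => Fin.mk_le_of_le_val (Nat.le_pred_of_lt i.isLt)
  have hIicL : Finset.Iic L = Finset.univ := by
    ext i; simp [hleL i]
  set T : ℕ := ∑ l : Fin k, (b l : ℕ) with hT
  have hjvL : (jv L : ℕ) = T := by rw [hb L, hIicL]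
  -- mz z = T
  have hmz : mz z = T := by
    apply le_antisymm
    · apply Finset.sup_le
      intro ℓ _
      obtain ⟨i, hi⟩ := hzval ℓ
      rw [hi, ← hjvL]
      exact hmono.monotone (hleL i)
    · have : (jv L : ℕ) ∈ Finset.image (fun i => (z i : ℕ)) Finset.univ := by
        rw [himg]; exact Finset.mem_image_of_mem _ (Finset.mem_univ L)
      obtain ⟨ℓ, -, hℓ⟩ := Finset.mem_image.mp this
      rw [← hjvL, ← hℓ]
      exact Finset.le_sup (f := fun i => ((z i : ℕ))) (Finset.mem_univ ℓ)
  -- gz on each block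
  have hgz : ∀ i : Fin k, ∀ j : ℕ, S i < j → j ≤ (jv i : ℕ) → gz z j = A i := by
    intro i j h1 h2
    have hset : (Finset.univ.filter fun ℓ => j ≤ (z ℓ : ℕ))
        = (Finset.Ici i).biUnion fun l => c (σ l) := by
      ext ℓ
      simp only [Finset.mem_filter, Finset.mem_univ, true_and, Finset.mem_biUnion,
        Finset.mem_Ici, hσ]
      constructor
      · intro hj
        obtain ⟨l, hl⟩ := hzval ℓ
        refine ⟨l, ?_, by simp [hl]⟩
        by_contra hli
        push_neg at hli
        have hsub : Finset.Iic l ⊆ Finset.Iio i := fun x hx =>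
          Finset.mem_Iio.mpr (lt_of_le_of_lt (Finset.mem_Iic.mp hx) hli)
        have : (jv l : ℕ) ≤ S i := by
          rw [hb l]; exact Finset.sum_le_sum_of_subset hsub
        have : (z ℓ : ℕ) ≤ S i := by rw [hl]; exact this
        omega
      · rintro ⟨l, hil, hl⟩
        rw [hl]
        exact le_trans h2 (hmono.monotone hil)
    rw [gz, hset, Finset.card_biUnion]
    intro l hl l' hl' hll'
    exact hdisj _ _ (fun h => hll' (σ.injective h))
  -- each block product
  have hblock : ∀ i : Fin k,
      ∏ j ∈ Finset.Ioc (S i) (S i + (b i : ℕ)), f j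
        = risingFactorial (α / d + (S i : ℝ)) (b i)
            / risingFactorial (((A i : ℝ) + α) / d + (S i : ℝ)) (b i) := by
    intro i
    have hIoc : Finset.Ioc (S i) (S i + (b i : ℕ)) = Finset.Ico (S i + 1) (S i + (b i : ℕ) + 1) :=
      (Finset.Ico_add_one_add_one_eq_Ioc _ _).symm
    rw [hIoc, Finset.prod_Ico_eq_prod_range]
    have hcard : S i + (b i : ℕ) + 1 - (S i + 1) = (b i : ℕ) := by omega
    rw [hcard, risingFactorial, risingFactorial, ← Finset.prod_div_distrib]
    apply Finset.prod_congr rfl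
    intro t ht
    have ht' : t < (b i : ℕ) := Finset.mem_range.mp ht
    have hg : gz z (S i + 1 + t) = A i := by
      apply hgz i _ (by omega)
      rw [hjvS i]; omega
    simp only [hf, hg]
    have h1 : α + ((↑(S i + 1 + t) : ℝ) - 1) * d = (α / d + (S i : ℝ) + t) * d := by
      push_cast; field_simp; ring
    have h2 : (A i : ℝ) + α + ((↑(S i + 1 + t) : ℝ) - 1) * d
        = (((A i : ℝ) + α) / d + (S i : ℝ) + t) * d := by
      push_cast; field_simp; ring
    rw [h1, h2, mul_div_mul_right _ _ hd0]
  -- B : ℕ version of b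
  classical
  set B : ℕ → ℕ := fun l => if h : l < k then (b ⟨l, h⟩ : ℕ) else 0 with hB
  have hrange : ∀ i : Fin k, ∑ l ∈ Finset.range (i : ℕ), B l = S i := by
    intro i
    rw [hS]
    rw [← Nat.Iio_eq_range, ← Fin.map_valEmbedding_Iio, Finset.sum_map]
    apply Finset.sum_congr rfl
    intro l _
    simp [hB, l.isLt]
  have hrange' : ∀ i : Fin k, ∑ l ∈ Finset.range ((i : ℕ) + 1), B l = S i + (b i : ℕ) := by
    intro i
    rw [Finset.sum_range_succ, hrange i, hB]
    simp [i.isLt]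
  have hrangek : ∑ l ∈ Finset.range k, B l = T := by
    rw [hT, ← Fin.sum_univ_eq_sum_range]
    apply Finset.sum_congr rfl
    intro l _
    simp [hB, l.isLt]
  -- main chain
  calc ∏ j ∈ Finset.Icc 1 (mz z), f j
      = ∏ j ∈ Finset.Ioc 0 (∑ l ∈ Finset.range k, B l), f j := by
        rw [hrangek, hmz, ← Finset.Icc_add_one_left_eq_Ioc, zero_add]
    _ = ∏ i ∈ Finset.range k,
          ∏ j ∈ Finset.Ioc (∑ l ∈ Finset.range i, B l) (∑ l ∈ Finset.range (i+1), B l), f j :=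
        prod_Ioc_chunks f B k
    _ = ∏ i : Fin k,
          ∏ j ∈ Finset.Ioc (∑ l ∈ Finset.range (i:ℕ), B l) (∑ l ∈ Finset.range ((i:ℕ)+1), B l), f j :=
        (Fin.prod_univ_eq_prod_range _ k).symm
    _ = ∏ i : Fin k,
          risingFactorial (α / d + ∑ l ∈ Finset.Iio i, ((b l : ℕ) : ℝ)) (b i) /
            risingFactorial
              (((∑ l ∈ Finset.Ici i, ((c (σ l)).card : ℝ)) + α) / d +
                ∑ l ∈ Finset.Iio i, ((b l : ℕ) : ℝ)) (b i) := by
        apply Finset.prod_congr rfl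
        intro i _
        rw [hrange i, hrange' i, hblock i]
        have e1 : ((S i : ℕ) : ℝ) = ∑ l ∈ Finset.Iio i, ((b l : ℕ) : ℝ) := by
          rw [hS]; push_cast; rfl
        have e2 : ((A i : ℕ) : ℝ) = ∑ l ∈ Finset.Ici i, ((c (σ l)).card : ℝ) := by
          rw [hA]; push_cast; rfl
        rw [e1, e2]
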